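/- Let Ĩ, J be random variables on finite sets with I(Ĩ;J) < β, and let α ∈ (0,1). Define I by the kernel P_{I|Ĩ}(i|ĩ) = 1 − α + α·P_{Ĩ}(ĩ) if i = ĩ and α·P_{Ĩ}(i) otherwise, jointly with (Ĩ,J) via the Markov chain I − Ĩ − J. Then P_{I,J}(i,j) ≥ α·P_I(i)·P_J(j) for all (i,j). -/
import Mathlib


open Finset

section
variable {I J : Type*} [Fintype I] [Fintype J] [DecidableEq I]

/-- Marginal of a joint pmf on the first coordinate. -/
noncomputable def margI (p : I × J → ℝ) : I → ℝ := fun i => ∑ j, p (i, j)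

/-- Marginal of a joint pmf on the second coordinate. -/
noncomputable def margJ (p : I × J → ℝ) : J → ℝ := fun j => ∑ i, p (i, j)

open Classical in
/-- Mutual information `I(Ĩ;J) = D(P_{Ĩ,J} ‖ P_{Ĩ}⊗P_J)` (base-2 logarithms). -/
noncomputable def mutInfo (p : I × J → ℝ) : ℝ :=
  ∑ x, if 0 < p x then p x * Real.logb 2 (p x / (margI p x.1 * margJ p x.2)) else 0

/-- The kernel `P_{I|Ĩ}(i|ĩ) = 1 − α + α·P_{Ĩ}(ĩ)` if `i = ĩ`, and `α·P_{Ĩ}(i)` otherwise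
(here `i'` plays the role of `ĩ`). -/
noncomputable def fakeKernel (p : I × J → ℝ) (α : ℝ) : I → I → ℝ :=
  fun i i' => if i = i' then 1 - α + α * margI p i' else α * margI p i

/-- with `(I,Ĩ,J)` distributed as `P_{I|Ĩ}(i|ĩ)·P_{Ĩ,J}(ĩ,j)`, the
`(I,J)`-marginal satisfies `P_{I,J}(i,j) ≥ α·P_I(i)·P_J(j)` for all `(i,j)`. -/
theorem fake_joint_lower_bound (p : I × J → ℝ)
    (hp : (∀ x, 0 ≤ p x) ∧ ∑ x, p x = 1)
    (β : ℝ) (hmi : mutInfo p < β)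
    (α : ℝ) (hα : α ∈ Set.Ioo (0 : ℝ) 1) :
    ∀ i j, (∑ i', fakeKernel p α i i' * p (i', j)) ≥
      α * (∑ i', ∑ j', fakeKernel p α i i' * p (i', j')) * margJ p j := by
  intro i j
  have key : ∀ j, (∑ i', fakeKernel p α i i' * p (i', j)) =
      (1 - α) * p (i, j) + α * margI p i * margJ p j := by
    intro j
    have h1 : ∀ i' : I, fakeKernel p α i i' * p (i', j) =
        (if i' = i then (1 - α) * p (i, j) else 0) + α * margI p i * p (i', j) := by
      intro i'
      by_cases h : i = i'
      · subst h; simp [fakeKernel]; ring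
      · simp [fakeKernel, h, Ne.symm h]
    rw [Finset.sum_congr rfl fun i' _ => h1 i', Finset.sum_add_distrib,
      Finset.sum_ite_eq' Finset.univ i, ← Finset.mul_sum]
    simp [margJ]
  have hsum : (∑ i', ∑ j', fakeKernel p α i i' * p (i', j')) = margI p i := by
    rw [Finset.sum_comm]
    have : ∀ j', (∑ i', fakeKernel p α i i' * p (i', j')) =
        (1 - α) * p (i, j') + α * margI p i * margJ p j' := fun j' => key j'
    rw [Finset.sum_congr rfl fun j' _ => this j', Finset.sum_add_distrib,
      ← Finset.mul_sum, ← Finset.mul_sum]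
    have hJ : (∑ j', margJ p j') = 1 := by
      rw [← hp.2]; simp only [margJ]
      rw [Fintype.sum_prod_type]
      exact Finset.sum_comm
    have hI : (∑ j', p (i, j')) = margI p i := rfl
    rw [hJ, hI]; ring
  rw [key j, hsum]
  have h0 : 0 ≤ (1 - α) * p (i, j) :=
    mul_nonneg (by linarith [hα.2]) (hp.1 (i, j))
  linarith
end
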